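/- Let x_1,…,x_m ∈ ℝ^d satisfy max_i ‖x_i‖ ≤ 1 and be separable with margin γ ∈ (0,1], let ℓ be the logistic loss, and consider stochastic gradient descent with step size 1: i_1, i_2, … i.i.d. uniform on {1,…,m}, w_1 = 0, w_{t+1} = w_t − ℓ'(x_{i_t}ᵀw_t)·x_{i_t}, and averaged iterate v_T = (1/T)Σ_{t=1}^T w_t. Then for any T > 1/γ², the expected empirical risk satisfies E[L̂(v_T)] ≤ (4/(3γ²T))·(1 + (1/2)log²(γ²T)), where the expectation is over the random indices i_1,…,i_{T}. -/

import Mathlib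

lemma log_lb {u : ℝ} (hu : 0 ≤ u) : 2 * u / (2 + u) ≤ Real.log (1 + u) := by
  set g : ℝ → ℝ := fun u => Real.log (1 + u) - 2 * u / (2 + u) with hg
  have hd : ∀ y : ℝ, 0 ≤ y → HasDerivAt g ((1 + y)⁻¹ - 4 / (2 + y) ^ 2) y := by
    intro y hy
    have h1 : HasDerivAt (fun y : ℝ => 1 + y) 1 y := (hasDerivAt_id y).const_add 1
    have h2 := h1.log (by linarith : (1:ℝ) + y ≠ 0)
    have h3 : HasDerivAt (fun y : ℝ => 2 * y) 2 y := by
      simpa using (hasDerivAt_id y).const_mul (2:ℝ)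
    have h4 : HasDerivAt (fun y : ℝ => 2 + y) 1 y := (hasDerivAt_id y).const_add 2
    have h5 := h3.div h4 (by linarith : (2:ℝ) + y ≠ 0)
    have h6 := h2.sub h5
    refine h6.congr_deriv ?_
    have h0 : (1:ℝ) + y ≠ 0 := by linarith
    have h0' : (2:ℝ) + y ≠ 0 := by linarith
    field_simp
    ring
  have hmono : MonotoneOn g (Set.Ici 0) := by
    apply monotoneOn_of_deriv_nonneg (convex_Ici 0)
    · intro y hy
      exact (hd y hy).continuousAt.continuousWithinAt
    · intro y hy
      rw [interior_Ici] at hy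
      exact ((hd y hy.le).differentiableAt).differentiableWithinAt
    · intro y hy
      rw [interior_Ici] at hy
      rw [(hd y hy.le).deriv]
      have hy0 : (0:ℝ) < y := hy
      rw [sub_nonneg, inv_eq_one_div, div_le_div_iff₀ (by positivity) (by positivity)]
      nlinarith
  have h0 : g 0 = 0 := by simp [hg]
  have := hmono (Set.self_mem_Ici) (Set.mem_Ici.2 hu) hu
  rw [h0] at this
  simpa [hg, sub_nonneg] using this

noncomputable def lgst (z : ℝ) : ℝ := Real.log (1 + Real.exp (-z))
noncomputable def lgst' (z : ℝ) : ℝ := -Real.exp (-z) / (1 + Real.exp (-z))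

lemma one_add_exp_pos (z : ℝ) : 0 < 1 + Real.exp z := by positivity

lemma lgst_hasDeriv (z : ℝ) : HasDerivAt lgst (lgst' z) z := by
  have h1 : HasDerivAt (fun z : ℝ => -z) (-1) z := (hasDerivAt_id z).neg
  have h2 := h1.exp
  have h3 := (h2.const_add 1)
  have h4 := h3.log (ne_of_gt (one_add_exp_pos (-z)))
  refine h4.congr_deriv ?_
  unfold lgst'
  ring

lemma lgst'_eq (z : ℝ) : lgst' z = -(Real.exp z + 1)⁻¹ := by
  unfold lgst'
  rw [Real.exp_neg]
  have h := Real.exp_pos z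
  field_simp

lemma lgst'_mono : Monotone lgst' := by
  intro a b hab
  rw [lgst'_eq, lgst'_eq, neg_le_neg_iff]
  have := Real.exp_pos a
  have := Real.exp_le_exp.2 hab
  gcongr <;> linarith


lemma lgst_nonneg (z : ℝ) : 0 ≤ lgst z :=
  Real.log_nonneg (by linarith [Real.exp_pos (-z)])

lemma lgst_anti {a b : ℝ} (hab : a ≤ b) : lgst b ≤ lgst a := by
  unfold lgst
  have := Real.exp_pos (-b)
  apply Real.log_le_log (by linarith)
  have : Real.exp (-b) ≤ Real.exp (-a) := Real.exp_le_exp.2 (by linarith)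
  linarith

lemma lgst_le_exp (z : ℝ) : lgst z ≤ Real.exp (-z) := by
  have h := Real.log_le_sub_one_of_pos (one_add_exp_pos (-z))
  unfold lgst
  linarith

lemma lgst_tangent (a b : ℝ) : lgst' a * (b - a) ≤ lgst b - lgst a := by
  rcases lt_trichotomy a b with h | h | h
  · obtain ⟨c, hc, hc'⟩ := exists_hasDerivAt_eq_slope lgst lgst' h
      (fun z _ => (lgst_hasDeriv z).continuousAt.continuousWithinAt)
      (fun z _ => lgst_hasDeriv z)
    have h1 : lgst' a ≤ lgst' c := lgst'_mono hc.1.le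
    have h2 : lgst' c * (b - a) = lgst b - lgst a := by
      rw [hc', div_mul_cancel₀ _ (sub_ne_zero.2 h.ne')]
    nlinarith [sub_pos.2 h]
  · simp [h]
  · obtain ⟨c, hc, hc'⟩ := exists_hasDerivAt_eq_slope lgst lgst' h
      (fun z _ => (lgst_hasDeriv z).continuousAt.continuousWithinAt)
      (fun z _ => lgst_hasDeriv z)
    have h1 : lgst' c ≤ lgst' a := lgst'_mono hc.2.le
    have h2 : lgst' c * (a - b) = lgst a - lgst b := by
      rw [hc', div_mul_cancel₀ _ (sub_ne_zero.2 h.ne')]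
    nlinarith [sub_pos.2 h]

lemma lgst'_sq_le (z : ℝ) : (lgst' z) ^ 2 ≤ lgst z / 2 := by
  have hu : 0 < Real.exp (-z) := Real.exp_pos _
  set u := Real.exp (-z) with hud
  have h1 : (lgst' z) ^ 2 = (u / (1 + u)) ^ 2 := by
    unfold lgst'
    rw [← hud]
    ring
  have h2 : (u / (1 + u)) ^ 2 ≤ u / (2 + u) := by
    rw [div_pow, div_le_div_iff₀ (by positivity) (by positivity)]
    nlinarith
  have h3 := log_lb hu.le
  have h4 : lgst z = Real.log (1 + u) := rfl
  rw [h1, h4]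
  have h5 : u / (2 + u) ≤ Real.log (1 + u) / 2 := by
    rw [div_le_div_iff₀ (by positivity) (by norm_num)]
    calc u * 2 = (2 * u / (2 + u)) * (2 + u) := by field_simp
    _ ≤ Real.log (1 + u) * (2 + u) := by
        apply mul_le_mul_of_nonneg_right h3 (by positivity)
  linarith

lemma lgst_jensen {n : ℕ} (hn : 0 < n) (z : ℕ → ℝ) :
    lgst ((n : ℝ)⁻¹ * ∑ s ∈ Finset.range n, z s) ≤
      (n : ℝ)⁻¹ * ∑ s ∈ Finset.range n, lgst (z s) := by
  set zb := (n : ℝ)⁻¹ * ∑ s ∈ Finset.range n, z s with hzb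
  have hnn : (0:ℝ) < n := by exact_mod_cast hn
  have h1 : ∀ s ∈ Finset.range n, lgst zb + lgst' zb * (z s - zb) ≤ lgst (z s) := by
    intro s _
    have := lgst_tangent zb (z s)
    linarith
  have h2 := Finset.sum_le_sum h1
  have h3 : ∑ s ∈ Finset.range n, (lgst zb + lgst' zb * (z s - zb)) = (n : ℝ) * lgst zb := by
    rw [Finset.sum_add_distrib, Finset.sum_const, Finset.card_range, ← Finset.mul_sum]
    have h4 : ∑ s ∈ Finset.range n, (z s - zb) = 0 := by
      rw [Finset.sum_sub_distrib, Finset.sum_const, Finset.card_range]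
      have : (n : ℝ) * zb = ∑ s ∈ Finset.range n, z s := by
        rw [hzb]; field_simp
      rw [nsmul_eq_mul, this]; ring
    rw [h4, mul_zero, add_zero, nsmul_eq_mul]
  rw [h3] at h2
  rw [inv_mul_eq_div, le_div_iff₀ hnn]
  linarith [h2]

open scoped RealInnerProductSpace

lemma sgd_step {d : ℕ} (xi w u : EuclideanSpace ℝ (Fin d)) (hxi : ‖xi‖ ≤ 1) :
    (3/4) * lgst ⟪xi, w⟫ ≤ lgst ⟪xi, u⟫ +
      (‖w - u‖ ^ 2 - ‖(w - lgst' ⟪xi, w⟫ • xi) - u‖ ^ 2) / 2 := by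
  set z := ⟪xi, w⟫ with hz
  set c := lgst' z with hc
  have hexp : ‖(w - c • xi) - u‖ ^ 2 =
      ‖w - u‖ ^ 2 - 2 * (c * ⟪xi, w - u⟫) + c ^ 2 * ‖xi‖ ^ 2 := by
    have : (w - c • xi) - u = (w - u) - c • xi := by abel
    rw [this, norm_sub_sq_real, real_inner_smul_right, norm_smul, mul_pow,
      Real.norm_eq_abs, sq_abs, real_inner_comm]
  have hinner : ⟪xi, w - u⟫ = z - ⟪xi, u⟫ := by rw [inner_sub_right, hz]
  have htan : c * (⟪xi, u⟫ - z) ≤ lgst ⟪xi, u⟫ - lgst z := lgst_tangent z _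
  have hsq : c ^ 2 * ‖xi‖ ^ 2 ≤ lgst z / 2 := by
    calc c ^ 2 * ‖xi‖ ^ 2 ≤ c ^ 2 * 1 := by
          apply mul_le_mul_of_nonneg_left _ (sq_nonneg c)
          calc ‖xi‖ ^ 2 ≤ 1 ^ 2 := by gcongr
          _ = 1 := one_pow 2
    _ = c ^ 2 := mul_one _
    _ ≤ lgst z / 2 := lgst'_sq_le z
  rw [hexp, hinner]
  have h5 : c * (z - ⟪xi, u⟫) = -(c * (⟪xi, u⟫ - z)) := by ring
  linarith [htan, hsq]

/-- expected risk of averaged SGD with the logistic loss.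
The randomness of SGD is modelled by a uniformly random choice of the sequence
of indices `ι : Fin T → Fin m` (the index `ι t` is the one used in the update
producing `w_{t+1}`, for `1 ≤ t < T`; the iterates `w₁,…,w_T` depend only on
these). For any `T > 1/γ²`, the expectation of `L̂(v_T)` over this choice
(each of the `m^T` sequences having probability `m^{-T}`) is at most
`(4/(3γ²T))·(1 + (1/2)log²(γ²T))`. -/
theorem stmt_12 {d m : ℕ} (hm : 0 < m)
    (x : Fin m → EuclideanSpace ℝ (Fin d)) (hx : ∀ i, ‖x i‖ ≤ 1)
    (γ : ℝ) (hγ : γ ∈ Set.Ioc (0 : ℝ) 1)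
    (w₀ : EuclideanSpace ℝ (Fin d)) (hw₀ : ‖w₀‖ = 1)
    (hsep : ∀ i, γ ≤ ⟪x i, w₀⟫)
    (ℓ ℓ' : ℝ → ℝ)
    (hℓ : ∀ z, ℓ z = Real.log (1 + Real.exp (-z)))
    (hderiv : ∀ z, HasDerivAt ℓ (ℓ' z) z)
    (L : EuclideanSpace ℝ (Fin d) → ℝ)
    (hL : ∀ v, L v = (1 / m) * ∑ i, ℓ ⟪x i, v⟫)
    (T : ℕ) (hT : 1 / γ ^ 2 < (T : ℝ))
    (W : (Fin T → Fin m) → ℕ → EuclideanSpace ℝ (Fin d))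
    (hW1 : ∀ ι, W ι 1 = 0)
    (hWrec : ∀ ι (t : Fin T), 1 ≤ (t : ℕ) →
      W ι ((t : ℕ) + 1) = W ι (t : ℕ) - ℓ' ⟪x (ι t), W ι (t : ℕ)⟫ • x (ι t))
    (v : (Fin T → Fin m) → EuclideanSpace ℝ (Fin d))
    (hv : ∀ ι, v ι = (T : ℝ)⁻¹ • ∑ t ∈ Finset.Icc 1 T, W ι t) :
    ((m : ℝ) ^ T)⁻¹ * ∑ ι : Fin T → Fin m, L (v ι) ≤
      4 / (3 * γ ^ 2 * T) * (1 + (1 / 2) * (Real.log (γ ^ 2 * T)) ^ 2) := by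
  classical
  obtain ⟨hγ0, hγ1⟩ := hγ
  have hγ2 : (0:ℝ) < γ ^ 2 := by positivity
  have hℓE : ℓ = lgst := funext fun z => hℓ z
  subst hℓE
  have hℓ'E : ℓ' = lgst' := funext fun z => HasDerivAt.unique (hderiv z) (lgst_hasDeriv z)
  subst hℓ'E
  have h1T : (1:ℝ) < T := by
    have h : (1:ℝ) ≤ 1 / γ ^ 2 := by
      rw [le_div_iff₀ hγ2]; nlinarith
    linarith
  have hTn : 1 < T := by exact_mod_cast h1T
  have hTpos : 0 < T := by omega
  have hTR : (0:ℝ) < T := by exact_mod_cast hTpos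
  have hγT : 1 < γ ^ 2 * T := by
    have h := (div_lt_iff₀ hγ2).1 hT
    nlinarith
  set c := Real.log (γ ^ 2 * T) with hcdef
  have hc0 : 0 < c := Real.log_pos hγT
  set u : EuclideanSpace ℝ (Fin d) := (c / γ) • w₀ with hu
  have hnormu : ‖u‖ ^ 2 = c ^ 2 / γ ^ 2 := by
    rw [hu, norm_smul, Real.norm_eq_abs, hw₀, mul_one, sq_abs, div_pow]
  have hxu : ∀ i, lgst ⟪x i, u⟫ ≤ 1 / (γ ^ 2 * T) := by
    intro i
    have h1 : c ≤ ⟪x i, u⟫ := by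
      rw [hu, real_inner_smul_right]
      have hs := hsep i
      calc c = (c / γ) * γ := by field_simp
      _ ≤ (c / γ) * ⟪x i, w₀⟫ := mul_le_mul_of_nonneg_left hs (by positivity)
    calc lgst ⟪x i, u⟫ ≤ lgst c := lgst_anti h1
    _ ≤ Real.exp (-c) := lgst_le_exp c
    _ = 1 / (γ ^ 2 * T) := by
        rw [hcdef, Real.exp_neg, Real.exp_log (by positivity), one_div]
  set p : ℕ → Fin T := fun s => if h : s + 1 < T then ⟨s+1, h⟩ else ⟨0, hTpos⟩ with hpdef
  set Q : (Fin T → Fin m) → ℕ → EuclideanSpace ℝ (Fin d) := fun ι => Nat.rec 0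
    (fun s Qs => Qs - lgst' ⟪x (ι (p s)), Qs⟫ • x (ι (p s))) with hQdef
  have hQ0 : ∀ ι, Q ι 0 = 0 := fun ι => rfl
  have hQs : ∀ ι s, Q ι (s+1) = Q ι s - lgst' ⟪x (ι (p s)), Q ι s⟫ • x (ι (p s)) :=
    fun ι s => rfl
  have hQW : ∀ ι s, s + 1 ≤ T → Q ι s = W ι (s+1) := by
    intro ι s
    induction s with
    | zero => intro _; rw [hQ0, hW1]
    | succ s ih =>
      intro hs
      have hsT : s + 1 < T := by omega
      have hps : p s = ⟨s+1, hsT⟩ := dif_pos hsT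
      have hrec := hWrec ι ⟨s+1, hsT⟩ (Nat.succ_le_succ (Nat.zero_le s))
      rw [hQs, hps, ih (by omega)]
      exact hrec.symm
  have hQagree : ∀ s (ι ι' : Fin T → Fin m),
      (∀ q : Fin T, 1 ≤ (q:ℕ) → (q:ℕ) ≤ s → ι q = ι' q) → s < T → Q ι s = Q ι' s := by
    intro s
    induction s with
    | zero => intro ι ι' _ _; rw [hQ0, hQ0]
    | succ s ih =>
      intro ι ι' hagree hsT
      have hs1 : s + 1 < T := hsT
      have hps : p s = ⟨s+1, hs1⟩ := dif_pos hs1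
      have h1 : ι ⟨s+1, hs1⟩ = ι' ⟨s+1, hs1⟩ :=
        hagree ⟨s+1, hs1⟩ (Nat.succ_le_succ (Nat.zero_le s)) (Nat.le_refl (s+1))
      have h2 : Q ι s = Q ι' s :=
        ih ι ι' (fun q hq1 hq2 => hagree q hq1 (by omega)) (by omega)
      rw [hQs, hQs, hps, h1, h2]
  have hregret : ∀ ι : Fin T → Fin m,
      (3/4) * ∑ s ∈ Finset.range T, lgst ⟪x (ι (p s)), Q ι s⟫ ≤
        ∑ s ∈ Finset.range T, lgst ⟪x (ι (p s)), u⟫ + ‖u‖ ^ 2 / 2 := by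
    intro ι
    have hstep : ∀ s ∈ Finset.range T, (3/4) * lgst ⟪x (ι (p s)), Q ι s⟫ ≤
        lgst ⟪x (ι (p s)), u⟫ + (‖Q ι s - u‖^2 - ‖Q ι (s+1) - u‖^2)/2 := by
      intro s _
      have h := sgd_step (x (ι (p s))) (Q ι s) u (hx _)
      rw [hQs]
      exact h
    have hsum := Finset.sum_le_sum hstep
    rw [← Finset.mul_sum, Finset.sum_add_distrib, ← Finset.sum_div,
      Finset.sum_range_sub' (fun s => ‖Q ι s - u‖^2) T] at hsum
    have h0 : ‖Q ι 0 - u‖^2 = ‖u‖^2 := by rw [hQ0, zero_sub, norm_neg]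
    rw [h0] at hsum
    have hnn : (0:ℝ) ≤ ‖Q ι T - u‖^2 := sq_nonneg _
    linarith
  have hjensen : ∀ ι, L (v ι) ≤ (T:ℝ)⁻¹ * ∑ s ∈ Finset.range T, L (W ι (s+1)) := by
    intro ι
    have key : ∀ i : Fin m, ⟪x i, v ι⟫ =
        (T:ℝ)⁻¹ * ∑ s ∈ Finset.range T, ⟪x i, W ι (s+1)⟫ := by
      intro i
      rw [hv, real_inner_smul_right, inner_sum]
      congr 1
      rw [← Finset.Ico_add_one_right_eq_Icc, Finset.sum_Ico_eq_sum_range]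
      simp [add_comm]
    have hbound : ∀ i : Fin m, lgst ⟪x i, v ι⟫ ≤
        (T:ℝ)⁻¹ * ∑ s ∈ Finset.range T, lgst ⟪x i, W ι (s+1)⟫ := by
      intro i
      rw [key i]
      exact lgst_jensen hTpos _
    rw [hL]
    calc (1/(m:ℝ)) * ∑ i, lgst ⟪x i, v ι⟫
        ≤ (1/(m:ℝ)) * ∑ i, ((T:ℝ)⁻¹ * ∑ s ∈ Finset.range T, lgst ⟪x i, W ι (s+1)⟫) :=
          mul_le_mul_of_nonneg_left (Finset.sum_le_sum (fun i _ => hbound i)) (by positivity)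
    _ = (T:ℝ)⁻¹ * ∑ s ∈ Finset.range T, ((1/(m:ℝ)) * ∑ i, lgst ⟪x i, W ι (s+1)⟫) := by
        rw [← Finset.mul_sum, Finset.sum_comm, ← mul_assoc,
          mul_comm (1/(m:ℝ)) ((T:ℝ)⁻¹), mul_assoc, Finset.mul_sum]
    _ = (T:ℝ)⁻¹ * ∑ s ∈ Finset.range T, L (W ι (s+1)) := by
        simp_rw [hL]
  have hswap : ∀ s, s < T → ∑ ι : Fin T → Fin m, ∑ i : Fin m, lgst ⟪x i, Q ι s⟫
      = (m:ℝ) * ∑ ι : Fin T → Fin m, lgst ⟪x (ι (p s)), Q ι s⟫ := by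
    intro s hsT
    set e := Equiv.funSplitAt (p s) (Fin m) with he
    have hQe : ∀ (j : Fin m) (r : {q : Fin T // q ≠ p s} → Fin m),
        Q (e.symm (j, r)) s = Q (e.symm (⟨0, hm⟩, r)) s := by
      intro j r
      refine hQagree s _ _ ?_ hsT
      intro q hq1 hq2
      have hqne : q ≠ p s := by
        intro hqeq
        have hvv : (p s : ℕ) = s + 1 ∨ (p s : ℕ) = 0 := by
          by_cases h : s + 1 < T
          · left; simp [hpdef, h]
          · right; simp [hpdef, h]
        rw [← hqeq] at hvv
        omega
      show e.symm (j, r) q = e.symm (⟨0, hm⟩, r) q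
      simp [he, Equiv.funSplitAt_symm_apply, hqne]
    have hA : ∀ (j : Fin m) (r : {q : Fin T // q ≠ p s} → Fin m), (e.symm (j, r)) (p s) = j := by
      intro j r; simp [he, Equiv.funSplitAt_symm_apply]
    rw [← Equiv.sum_comp e.symm (fun ι => ∑ i, lgst ⟪x i, Q ι s⟫),
        ← Equiv.sum_comp e.symm (fun ι => lgst ⟪x (ι (p s)), Q ι s⟫)]
    rw [Fintype.sum_prod_type, Fintype.sum_prod_type]
    simp_rw [hQe, hA]
    rw [Finset.sum_const, Finset.card_univ, Fintype.card_fin, nsmul_eq_mul]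
    congr 1
    exact Finset.sum_comm
  have hmono1 : ∑ ι : Fin T → Fin m, L (v ι) ≤
      (T:ℝ)⁻¹ * ∑ s ∈ Finset.range T, ∑ ι : Fin T → Fin m, L (W ι (s+1)) := by
    calc ∑ ι : Fin T → Fin m, L (v ι)
        ≤ ∑ ι : Fin T → Fin m, ((T:ℝ)⁻¹ * ∑ s ∈ Finset.range T, L (W ι (s+1))) :=
          Finset.sum_le_sum (fun ι _ => hjensen ι)
    _ = (T:ℝ)⁻¹ * ∑ s ∈ Finset.range T, ∑ ι : Fin T → Fin m, L (W ι (s+1)) := by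
        rw [← Finset.mul_sum, Finset.sum_comm]
  have hLQ : ∀ s ∈ Finset.range T, ∑ ι : Fin T → Fin m, L (W ι (s+1)) =
      ∑ ι : Fin T → Fin m, lgst ⟪x (ι (p s)), Q ι s⟫ := by
    intro s hs
    rw [Finset.mem_range] at hs
    have h1 : ∀ ι : Fin T → Fin m, L (W ι (s+1)) = (1/(m:ℝ)) * ∑ i, lgst ⟪x i, Q ι s⟫ := by
      intro ι; rw [← hQW ι s (by omega), hL]
    simp_rw [h1]
    rw [← Finset.mul_sum, hswap s hs, ← mul_assoc]
    have hmm : (1/(m:ℝ)) * m = 1 := by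
      field_simp
    rw [hmm, one_mul]
  have hbound2 : ∑ s ∈ Finset.range T, ∑ ι : Fin T → Fin m, lgst ⟪x (ι (p s)), Q ι s⟫ ≤
      (m:ℝ)^T * ((4/3) * (1/γ^2 + c^2/γ^2/2)) := by
    rw [Finset.sum_comm]
    have hpath : ∀ ι : Fin T → Fin m, ∑ s ∈ Finset.range T, lgst ⟪x (ι (p s)), Q ι s⟫ ≤
        (4/3) * (1/γ^2 + c^2/γ^2/2) := by
      intro ι
      have h1 := hregret ι
      have h2 : ∑ s ∈ Finset.range T, lgst ⟪x (ι (p s)), u⟫ ≤ (T:ℝ) * (1/(γ^2 * T)) := by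
        calc ∑ s ∈ Finset.range T, lgst ⟪x (ι (p s)), u⟫
            ≤ ∑ _s ∈ Finset.range T, 1/(γ^2 * T) := Finset.sum_le_sum (fun s _ => hxu _)
        _ = (T:ℝ) * (1/(γ^2 * T)) := by
            rw [Finset.sum_const, Finset.card_range, nsmul_eq_mul]
      have h3 : (T:ℝ) * (1/(γ^2*T)) = 1/γ^2 := by field_simp
      rw [hnormu] at h1
      linarith
    calc ∑ ι : Fin T → Fin m, ∑ s ∈ Finset.range T, lgst ⟪x (ι (p s)), Q ι s⟫
        ≤ ∑ _ι : Fin T → Fin m, (4/3) * (1/γ^2 + c^2/γ^2/2) :=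
          Finset.sum_le_sum (fun ι _ => hpath ι)
    _ = (m:ℝ)^T * ((4/3) * (1/γ^2 + c^2/γ^2/2)) := by
        rw [Finset.sum_const, Finset.card_univ, Fintype.card_fun]
        simp only [Fintype.card_fin, nsmul_eq_mul]
        push_cast
        ring
  have hfinal : ∑ ι : Fin T → Fin m, L (v ι) ≤
      (T:ℝ)⁻¹ * ((m:ℝ)^T * ((4/3) * (1/γ^2 + c^2/γ^2/2))) := by
    refine le_trans hmono1 ?_
    refine mul_le_mul_of_nonneg_left ?_ (by positivity)
    rw [Finset.sum_congr rfl hLQ]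
    exact hbound2
  have hmT : (0:ℝ) < (m:ℝ)^T := by positivity
  calc ((m:ℝ)^T)⁻¹ * ∑ ι : Fin T → Fin m, L (v ι)
      ≤ ((m:ℝ)^T)⁻¹ * ((T:ℝ)⁻¹ * ((m:ℝ)^T * ((4/3) * (1/γ^2 + c^2/γ^2/2)))) :=
        mul_le_mul_of_nonneg_left hfinal (by positivity)
  _ = 4 / (3 * γ ^ 2 * T) * (1 + (1 / 2) * c ^ 2) := by
      field_simp
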